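/- Let U_1, …, U_m be nonempty closed convex subsets of R^n with nonempty intersection U. Then the sequence (x_k) generated by the Parallel Polyhedral Projection Method from any starting point x_1 is bounded, and every accumulation point of (x_k) belongs to U. -/

import Mathlib

open Metric Filter Topology

/-- `p` is the metric projection of `z` onto `X`. -/
def IsProj {n : ℕ} (X : Set (EuclideanSpace ℝ (Fin n))) (z p : EuclideanSpace ℝ (Fin n)) : Prop :=
  p ∈ X ∧ ∀ y ∈ X, dist z p ≤ dist z y

private lemma proj_char {n : ℕ} {X : Set (EuclideanSpace ℝ (Fin n))} (hcv : Convex ℝ X)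
    {z q : EuclideanSpace ℝ (Fin n)} (h : IsProj X z q) :
    ∀ y ∈ X, inner ℝ (z - q) (y - q) ≤ (0 : ℝ) := by
  haveI : Nonempty X := ⟨⟨q, h.1⟩⟩
  have hiInf : ‖z - q‖ = ⨅ w : X, ‖z - w‖ := by
    apply le_antisymm
    · exact le_ciInf fun w => by simpa [dist_eq_norm] using h.2 w w.2
    · exact ciInf_le ⟨0, by rintro _ ⟨w, rfl⟩; positivity⟩ (⟨q, h.1⟩ : X)
  exact (norm_eq_iInf_iff_real_inner_le_zero hcv h.1).mp hiInf

/-- The 3PM sequence is bounded and all its accumulation points are in the intersection. -/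
theorem stmt4 {n m : ℕ} (U : Fin m → Set (EuclideanSpace ℝ (Fin n)))
    (hne : ∀ i, (U i).Nonempty) (hcl : ∀ i, IsClosed (U i)) (hcv : ∀ i, Convex ℝ (U i))
    (hU : (⋂ i, U i).Nonempty)
    (x : ℕ → EuclideanSpace ℝ (Fin n)) (p : ℕ → Fin m → EuclideanSpace ℝ (Fin n))
    (hp : ∀ k i, IsProj (U i) (x k) (p k i))
    (hstep : ∀ k, IsProj
      (⋂ i, {z : EuclideanSpace ℝ (Fin n) | inner ℝ (x k - p k i) (z - p k i) ≤ (0 : ℝ)})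
      (x k) (x (k + 1))) :
    (∃ C : ℝ, ∀ k, ‖x k‖ ≤ C) ∧
      ∀ y : EuclideanSpace ℝ (Fin n), MapClusterPt y atTop x → y ∈ ⋂ i, U i := by
  obtain ⟨u, hu⟩ := hU
  have huU : ∀ i, u ∈ U i := fun i => Set.mem_iInter.1 hu i
  set Ω : ℕ → Set (EuclideanSpace ℝ (Fin n)) :=
    fun k => ⋂ i, {z | inner ℝ (x k - p k i) (z - p k i) ≤ (0 : ℝ)} with hΩdef
  -- each Ω k is convex
  have hΩconv : ∀ k, Convex ℝ (Ω k) := by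
    intro k
    refine convex_iInter fun i => ?_
    intro z1 hz1 z2 hz2 s t hs ht hst
    simp only [Set.mem_setOf_eq] at hz1 hz2 ⊢
    have ht' : t = 1 - s := by linarith
    subst ht'
    have hsplit : (s • z1 + (1 - s) • z2) - p k i
        = s • (z1 - p k i) + (1 - s) • (z2 - p k i) := by
      module
    rw [hsplit, inner_add_right, real_inner_smul_right, real_inner_smul_right]
    nlinarith
  have huΩ : ∀ k, u ∈ Ω k := fun k =>
    Set.mem_iInter.2 fun i => proj_char (hcv i) (hp k i) u (huU i)
  -- Fejér key inequality
  have key : ∀ k, ‖x (k+1) - u‖^2 + ‖x k - x (k+1)‖^2 ≤ ‖x k - u‖^2 := by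
    intro k
    have h1 : inner ℝ (x k - x (k+1)) (u - x (k+1)) ≤ (0 : ℝ) :=
      proj_char (hΩconv k) (hstep k) u (huΩ k)
    have hsplit : x k - u = (x k - x (k+1)) + (x (k+1) - u) := by abel
    have hexp := norm_add_sq_real (x k - x (k+1)) (x (k+1) - u)
    rw [← hsplit] at hexp
    have h2 : (inner ℝ (x k - x (k+1)) (x (k+1) - u) : ℝ)
        = - inner ℝ (x k - x (k+1)) (u - x (k+1)) := by
      rw [← inner_neg_right, neg_sub]
    rw [h2] at hexp
    linarith
  have hmono : ∀ k, ‖x (k+1) - u‖ ≤ ‖x k - u‖ := by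
    intro k
    nlinarith [key k, sq_nonneg ‖x k - x (k+1)‖, norm_nonneg (x (k+1) - u),
      norm_nonneg (x k - u)]
  have hbd : ∀ k, ‖x k - u‖ ≤ ‖x 0 - u‖ := by
    intro k
    induction k with
    | zero => exact le_refl _
    | succ k ih => exact le_trans (hmono k) ih
  -- the squared distances converge
  have hanti : Antitone (fun k => ‖x k - u‖^2) := by
    refine antitone_nat_of_succ_le fun k => ?_
    nlinarith [key k, sq_nonneg ‖x k - x (k+1)‖]
  have hbdd : BddBelow (Set.range fun k => ‖x k - u‖^2) := by
    refine ⟨0, ?_⟩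
    rintro _ ⟨k, rfl⟩
    positivity
  have ha : Tendsto (fun k => ‖x k - u‖^2) atTop (nhds (⨅ k, ‖x k - u‖^2)) :=
    tendsto_atTop_ciInf hanti hbdd
  have hdiff : Tendsto (fun k => ‖x k - u‖^2 - ‖x (k+1) - u‖^2) atTop (nhds 0) := by
    have := ha.sub (ha.comp (tendsto_add_atTop_nat 1))
    simpa using this
  have hsq0 : Tendsto (fun k => ‖x k - x (k+1)‖^2) atTop (nhds 0) := by
    exact squeeze_zero (fun k => sq_nonneg _) (fun k => by linarith [key k]) hdiff
  have hn0 : Tendsto (fun k => ‖x k - x (k+1)‖) atTop (nhds 0) := by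
    have h := hsq0.sqrt
    rw [Real.sqrt_zero] at h
    exact h.congr fun k => Real.sqrt_sq (norm_nonneg _)
  -- distance to each U i is controlled
  have hdist : ∀ k i, ‖x k - p k i‖ ≤ ‖x k - x (k+1)‖ := by
    intro k i
    have hx1 : x (k+1) ∈ Ω k := (hstep k).1
    have h1 : inner ℝ (x k - p k i) (x (k+1) - p k i) ≤ (0 : ℝ) :=
      Set.mem_iInter.1 hx1 i
    have h2 : (inner ℝ (x k - p k i) (x k - p k i) : ℝ)
        = inner ℝ (x k - p k i) (x k - x (k+1)) + inner ℝ (x k - p k i) (x (k+1) - p k i) := by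
      rw [← inner_add_right]
      congr 1
      abel
    have h3 : (inner ℝ (x k - p k i) (x k - x (k+1)) : ℝ)
        ≤ ‖x k - p k i‖ * ‖x k - x (k+1)‖ := real_inner_le_norm _ _
    have h4 : (inner ℝ (x k - p k i) (x k - p k i) : ℝ) = ‖x k - p k i‖^2 :=
      real_inner_self_eq_norm_sq _
    nlinarith [norm_nonneg (x k - p k i), norm_nonneg (x k - x (k+1))]
  constructor
  · refine ⟨‖x 0 - u‖ + ‖u‖, fun k => ?_⟩
    calc ‖x k‖ = ‖(x k - u) + u‖ := by rw [sub_add_cancel]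
      _ ≤ ‖x k - u‖ + ‖u‖ := norm_add_le _ _
      _ ≤ ‖x 0 - u‖ + ‖u‖ := by linarith [hbd k]
  · intro y hy
    refine Set.mem_iInter.2 fun i => ?_
    have hyc : y ∈ closure (U i) := by
      rw [Metric.mem_closure_iff]
      intro ε hε
      have h1 : ∀ᶠ k in atTop, ‖x k - x (k+1)‖ < ε/2 :=
        hn0.eventually_lt_const (by linarith)
      have h2 : ∃ᶠ k in atTop, dist (x k) y < ε/2 := by
        have := (mapClusterPt_iff_frequently.1 hy) (ball y (ε/2)) (ball_mem_nhds y (by linarith))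
        simpa [mem_ball] using this
      obtain ⟨k, hk2, hk1⟩ := (h2.and_eventually h1).exists
      refine ⟨p k i, (hp k i).1, ?_⟩
      have hd : dist (x k) (p k i) = ‖x k - p k i‖ := dist_eq_norm _ _
      have : dist y (p k i) ≤ dist y (x k) + dist (x k) (p k i) := dist_triangle _ _ _
      rw [dist_comm y (x k)] at this
      have := hdist k i
      calc dist y (p k i) ≤ dist y (x k) + dist (x k) (p k i) := dist_triangle _ _ _
        _ < ε/2 + ε/2 := by
            rw [dist_comm y (x k), hd]
            exact add_lt_add hk2 (lt_of_le_of_lt (hdist k i) hk1)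
        _ = ε := by ring
    rwa [(hcl i).closure_eq] at hyc
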